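/- In Euclidean m-space (m ≥ 2) with two agents, let f be a deterministic, unanimous, translation-invariant, strategyproof mechanism. Then for every profile (A, B), the output W = f(A, B) satisfies (A − W) · (B − W) = 0, i.e., W lies on the sphere with segment AB as diameter. -/

import Mathlib

set_option maxHeartbeats 1000000


/-- In Euclidean m-space (m ≥ 2) with two agents, the output of a
deterministic, unanimous, translation-invariant, strategyproof mechanism lies on
the sphere with the agents' segment as diameter: `(A − W)·(B − W) = 0`. -/
theorem stmt5 {m : ℕ} (hm : 2 ≤ m)
    (f : EuclideanSpace ℝ (Fin m) → EuclideanSpace ℝ (Fin m) → EuclideanSpace ℝ (Fin m))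
    (hsp1 : ∀ A A' B, ‖f A B - A‖ ≤ ‖f A' B - A‖)
    (hsp2 : ∀ A B B', ‖f A B - B‖ ≤ ‖f A B' - B‖)
    (huna : ∀ C, f C C = C)
    (htrans : ∀ A B t, f (A + t) (B + t) = f A B + t) :
    ∀ A B : EuclideanSpace ℝ (Fin m),
      (inner ℝ (A - f A B) (B - f A B) : ℝ) = 0 := by
  intro A B
  set W : EuclideanSpace ℝ (Fin m) := f A B with hWdef
  set n : EuclideanSpace ℝ (Fin m) := A - W with hndef
  by_cases hn : n = 0
  · rw [hn]; simp
  set w : EuclideanSpace ℝ (Fin m) := W - B with hwdef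
  set c : ℝ := inner ℝ w n with hcdef
  have hnorm : (0:ℝ) < ‖n‖ := norm_pos_iff.mpr hn
  have hX : (0:ℝ) < ‖n‖^2 := by positivity
  -- Key inequalities for every s ∈ (0,1)
  have key : ∀ s : ℝ, 0 < s → s < 1 →
      2*(1-s)*c ≤ (1-s)^2 * ‖n‖^2 ∧ -(s^2 * ‖n‖^2) ≤ 2*s*c := by
    intro s hs0 hs1
    set Z : EuclideanSpace ℝ (Fin m) := W + s • n with hZdef
    -- (i) the output at (Z,B) is close to Z
    have hi : ‖f Z B - Z‖ ≤ s * ‖n‖ := by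
      have h := hsp1 Z A B
      rw [← hWdef] at h
      have h2 : W - Z = -(s • n) := by rw [hZdef]; abel
      rw [h2, norm_neg, norm_smul, Real.norm_eq_abs, abs_of_pos hs0] at h
      exact h
    -- (ii) the output at (Z,B) is not closer to A than W is
    have hii : ‖n‖ ≤ ‖f Z B - A‖ := by
      have h := hsp1 A Z B
      rw [← hWdef] at h
      have h2 : W - A = -n := by rw [hndef]; abel
      rw [h2, norm_neg] at h
      exact h
    set e : EuclideanSpace ℝ (Fin m) := Z - f Z B with hedef
    have he : ‖e‖ ≤ s * ‖n‖ := by rw [hedef, norm_sub_rev]; exact hi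
    have hfZ : f Z B - A = -((1-s) • n + e) := by
      rw [hedef, hZdef, hndef]; module
    have hii' : ‖n‖ ≤ ‖(1-s) • n + e‖ := by
      calc ‖n‖ ≤ ‖f Z B - A‖ := hii
        _ = ‖(1-s) • n + e‖ := by rw [hfZ, norm_neg]
    -- deduce e = s • n via equality in triangle/Cauchy-Schwarz
    have hexp := norm_add_sq_real ((1-s) • n) e
    have hsm : (inner ℝ ((1-s) • n) e : ℝ) = (1-s) * inner ℝ n e :=
      real_inner_smul_left n e (1-s)
    have hnsm : ‖(1-s) • n‖ = (1-s) * ‖n‖ := by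
      rw [norm_smul, Real.norm_eq_abs, abs_of_pos (by linarith)]
    have hsq1 : ‖n‖^2 ≤ ‖(1-s) • n + e‖^2 :=
      pow_le_pow_left₀ (norm_nonneg n) hii' 2
    have he2 : ‖e‖^2 ≤ (s*‖n‖)^2 :=
      pow_le_pow_left₀ (norm_nonneg e) he 2
    have hne : s * ‖n‖^2 ≤ (inner ℝ n e : ℝ) := by
      rw [hexp, hsm, hnsm] at hsq1
      nlinarith [hsq1, he2, hs0, hs1]
    have hcs : (inner ℝ n e : ℝ) ≤ ‖n‖ * ‖e‖ := real_inner_le_norm n e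
    have hee : ‖e‖ = s * ‖n‖ := by
      refine le_antisymm he ?_
      have h9 : ‖n‖ * (s * ‖n‖) ≤ ‖n‖ * ‖e‖ := by
        calc ‖n‖ * (s * ‖n‖) = s * ‖n‖^2 := by ring
          _ ≤ (inner ℝ n e : ℝ) := hne
          _ ≤ ‖n‖ * ‖e‖ := hcs
      exact le_of_mul_le_mul_left h9 hnorm
    have hie : (inner ℝ n e : ℝ) = ‖n‖ * ‖e‖ := by
      refine le_antisymm hcs ?_
      calc ‖n‖ * ‖e‖ = s * ‖n‖^2 := by rw [hee]; ring
        _ ≤ (inner ℝ n e : ℝ) := hne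
    have hsr : ‖e‖ • n = ‖n‖ • e := inner_eq_norm_mul_iff_real.mp hie
    have hes : e = s • n := by
      have h7 : ‖n‖ • e = (s * ‖n‖) • n := by rw [← hsr, hee]
      calc e = ‖n‖⁻¹ • (‖n‖ • e) := by
              rw [smul_smul, inv_mul_cancel₀ hnorm.ne', one_smul]
        _ = ‖n‖⁻¹ • ((s * ‖n‖) • n) := by rw [h7]
        _ = s • n := by
              rw [smul_smul]
              congr 1
              field_simp
    have hWs : f Z B = W := by
      have h8 : f Z B = Z - e := by rw [hedef]; abel
      rw [h8, hes, hZdef]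
      module
    -- agent 2's strategyproofness inequalities
    have hA2 : ‖w‖ ≤ ‖w + s • n‖ := by
      have h := hsp2 Z B Z
      rw [huna Z, hWs, ← hwdef] at h
      have e2 : Z - B = w + s • n := by rw [hZdef, hwdef]; module
      rw [e2] at h
      exact h
    have hA1 : ‖w‖ ≤ ‖w - (1-s) • n‖ := by
      have ht := htrans A B (Z - A)
      have hAZ : A + (Z - A) = Z := by abel
      rw [hAZ, ← hWdef] at ht
      have h := hsp2 Z B (B + (Z - A))
      rw [ht, hWs, ← hwdef] at h
      have e3 : W + (Z - A) - B = w - (1-s) • n := by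
        rw [hZdef, hwdef, hndef]; module
      rw [e3] at h
      exact h
    constructor
    · have hsq : ‖w‖^2 ≤ ‖w - (1-s) • n‖^2 :=
        pow_le_pow_left₀ (norm_nonneg w) hA1 2
      have hx := norm_sub_sq_real w ((1-s) • n)
      have hy : (inner ℝ w ((1-s) • n) : ℝ) = (1-s) * c := by
        rw [real_inner_smul_right, hcdef]
      have hz : ‖(1-s) • n‖^2 = (1-s)^2 * ‖n‖^2 := by
        rw [norm_smul, Real.norm_eq_abs, mul_pow, sq_abs]
      nlinarith [hsq, hx, hy, hz]
    · have hsq : ‖w‖^2 ≤ ‖w + s • n‖^2 :=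
        pow_le_pow_left₀ (norm_nonneg w) hA2 2
      have hx := norm_add_sq_real w (s • n)
      have hy : (inner ℝ w (s • n) : ℝ) = s * c := by
        rw [real_inner_smul_right, hcdef]
      have hz : ‖s • n‖^2 = s^2 * ‖n‖^2 := by
        rw [norm_smul, Real.norm_eq_abs, mul_pow, sq_abs]
      nlinarith [hsq, hx, hy, hz]
  -- conclude c = 0
  have h0 := key (1/2) (by norm_num) (by norm_num)
  have hc0 : c = 0 := by
    rcases lt_trichotomy c 0 with hc | hc | hc
    · exfalso
      have hs0 : 0 < -c / ‖n‖^2 := div_pos (neg_pos.mpr hc) hX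
      have hs1 : -c / ‖n‖^2 < 1 := by
        rw [div_lt_one hX]; nlinarith [h0.2]
      have hk := (key _ hs0 hs1).2
      have hmul : -c / ‖n‖^2 * ‖n‖^2 = -c := div_mul_cancel₀ _ hX.ne'
      nlinarith [hk, hmul, hc, hX]
    · exact hc
    · exfalso
      have hcu : c ≤ ‖n‖^2 / 4 := by nlinarith [h0.1]
      have hs0 : 0 < 1 - c / ‖n‖^2 := by
        rw [sub_pos, div_lt_one hX]; nlinarith
      have hs1 : 1 - c / ‖n‖^2 < 1 := by
        have : 0 < c / ‖n‖^2 := div_pos hc hX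
        linarith
      have hk := (key _ hs0 hs1).1
      have h1s : 1 - (1 - c / ‖n‖^2) = c / ‖n‖^2 := by ring
      rw [h1s] at hk
      have hmul : c / ‖n‖^2 * ‖n‖^2 = c := div_mul_cancel₀ _ hX.ne'
      nlinarith [hk, hmul, hc, hX]
  have hbw : B - W = -w := by rw [hwdef]; abel
  rw [hbw, inner_neg_right, real_inner_comm, ← hcdef, hc0, neg_zero]
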